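/- Let ℓ ≥ 3 be odd, ξ = exp(2πi/ℓ). In the module V_{μ₁,μ₂} with the actions given, F₁^ℓ = 0 where F₁ is the operator by which f₁ acts, i.e., f₁^ℓ acts as zero on V_{μ₁,μ₂}. -/

import Mathlib

/-- `ξ^x := exp(2πix/ℓ)` -/
noncomputable def qexp (ℓ : ℕ) (x : ℂ) : ℂ :=
  Complex.exp (2 * Real.pi * Complex.I * x / ℓ)

/-- valid basis indices `(ρ,σ,p)` of the module `V_{μ₁,μ₂}` -/
def valid (ℓ : ℕ) (ρ σ p : ℤ) : Prop :=
  (ρ = 0 ∨ ρ = 1) ∧ (σ = 0 ∨ σ = 1) ∧ 0 ≤ p ∧ p ≤ (ℓ : ℤ) - 1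

/-- the basis vector `w_{ρ,σ,p}`, with the convention that out-of-range
indices give the zero vector -/
noncomputable def w (ℓ : ℕ) (ρ σ p : ℤ) : (ℤ × ℤ × ℤ) →₀ ℂ :=
  open Classical in
  if valid ℓ ρ σ p then Finsupp.single (ρ, σ, p) 1 else 0

lemma qexp_mul (ℓ : ℕ) (x y : ℂ) : qexp ℓ x * qexp ℓ y = qexp ℓ (x + y) := by
  unfold qexp
  rw [← Complex.exp_add]
  ring_nf

lemma qexp_zero (ℓ : ℕ) : qexp ℓ 0 = 1 := by
  unfold qexp; simp

lemma qexp_pow (ℓ : ℕ) (x : ℂ) (n : ℕ) : qexp ℓ x ^ n = qexp ℓ (n * x) := by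
  unfold qexp
  rw [← Complex.exp_nat_mul]
  ring_nf

lemma w_zero_of_big (ℓ : ℕ) (ρ σ p : ℤ) (h : (ℓ : ℤ) - 1 < p) : w ℓ ρ σ p = 0 := by
  rw [w, if_neg]
  rintro ⟨-, -, -, h2⟩
  omega

lemma qexp_neg_one_pow (ℓ : ℕ) (hl : ℓ ≠ 0) : qexp ℓ (-1) ^ ℓ = 1 := by
  have hℓ : (ℓ : ℂ) ≠ 0 := Nat.cast_ne_zero.mpr hl
  rw [qexp_pow, qexp]
  have h : 2 * (Real.pi : ℂ) * Complex.I * ((ℓ : ℂ) * -1) / ℓ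
      = (-1 : ℤ) * (2 * Real.pi * Complex.I) := by
    field_simp
    norm_num
  rw [h, Complex.exp_int_mul_two_pi_mul_I]

lemma qexp_neg_one_ne_one (ℓ : ℕ) (h3 : 3 ≤ ℓ) : qexp ℓ (-1) ≠ 1 := by
  intro h
  rw [qexp, Complex.exp_eq_one_iff] at h
  obtain ⟨n, hn⟩ := h
  have hℓ : (ℓ : ℂ) ≠ 0 := Nat.cast_ne_zero.mpr (by omega)
  have hπ : (2 * (Real.pi : ℂ) * Complex.I) ≠ 0 := by
    simp [Real.pi_ne_zero, Complex.I_ne_zero]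
  have key : (-1 : ℂ) = n * ℓ := by
    field_simp at hn
    have h2 : 2 * (Real.pi : ℂ) * Complex.I * (-1)
        = 2 * (Real.pi : ℂ) * Complex.I * (n * ℓ) := by linear_combination (2 * (Real.pi : ℂ) * Complex.I) * hn
    exact mul_left_cancel₀ hπ h2
  have key2 : (-1 : ℤ) = n * ℓ := by exact_mod_cast key
  have : (ℓ : ℤ) ∣ 1 := ⟨-n, by linarith⟩
  have := Int.le_of_dvd one_pos this
  omega

theorem stmt15 (ℓ : ℕ) (h3 : 3 ≤ ℓ) (hodd : Odd ℓ)
    (F₁ : Module.End ℂ ((ℤ × ℤ × ℤ) →₀ ℂ))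
    (hF₁ : ∀ ρ σ p : ℤ, valid ℓ ρ σ p →
      F₁ (w ℓ ρ σ p) = qexp ℓ ((σ : ℂ) - p) • w ℓ ρ σ (p + 1)
        - ((ρ : ℂ) * (1 - (σ : ℂ)) * qexp ℓ (-(σ : ℂ))) • w ℓ (ρ - 1) (σ + 1) p) :
    ∀ ρ σ p : ℤ, valid ℓ ρ σ p → (F₁ ^ ℓ) (w ℓ ρ σ p) = 0 := by
  -- step lemma for the three "no jump" sectors
  have hstep : ∀ ρ σ : ℤ, (ρ = 0 ∨ ρ = 1) → (σ = 0 ∨ σ = 1) → ¬(ρ = 1 ∧ σ = 0) →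
      ∀ q : ℤ, 0 ≤ q → F₁ (w ℓ ρ σ q) = qexp ℓ ((σ : ℂ) - q) • w ℓ ρ σ (q + 1) := by
    intro ρ σ hρ hσ hns q hq
    by_cases hv : q ≤ (ℓ : ℤ) - 1
    · rw [hF₁ ρ σ q ⟨hρ, hσ, hq, hv⟩]
      have hc : ((ρ : ℂ) * (1 - (σ : ℂ)) * qexp ℓ (-(σ : ℂ))) = 0 := by
        rcases hρ with h1 | h1 <;> rcases hσ with h2 | h2 <;>
          simp_all
      rw [hc, zero_smul, sub_zero]
    · rw [w_zero_of_big ℓ ρ σ q (by omega), w_zero_of_big ℓ ρ σ (q + 1) (by omega)]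
      simp
  -- step lemma for the (1,0) sector
  have hD : ∀ q : ℤ, 0 ≤ q →
      F₁ (w ℓ 1 0 q) = qexp ℓ (-(q : ℂ)) • w ℓ 1 0 (q + 1) - w ℓ 0 1 q := by
    intro q hq
    by_cases hv : q ≤ (ℓ : ℤ) - 1
    · have := hF₁ 1 0 q ⟨Or.inr rfl, Or.inl rfl, hq, hv⟩
      norm_num at this
      rw [this]
      norm_num [qexp_zero]
    · rw [w_zero_of_big ℓ 1 0 q (by omega), w_zero_of_big ℓ 1 0 (q + 1) (by omega),
        w_zero_of_big ℓ 0 1 q (by omega)]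
      simp
  intro ρ σ p hv
  obtain ⟨hρ, hσ, hp0, hpl⟩ := hv
  by_cases hcase : ρ = 1 ∧ σ = 0
  · -- the interesting sector (1,0)
    obtain ⟨hρ1, hσ0⟩ := hcase
    subst hρ1; subst hσ0
    have key : ∀ k : ℕ, (F₁ ^ (k + 1)) (w ℓ 1 0 p)
        = qexp ℓ (-((k : ℂ) + 1) * p - ((k : ℂ) + 1) * k / 2) • w ℓ 1 0 (p + (k + 1))
          - (∑ j ∈ Finset.range (k + 1),
              qexp ℓ (-(j : ℂ) + (k : ℂ) * (2 - (p : ℂ)) - ((k : ℂ) + 1) * k / 2))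
            • w ℓ 0 1 (p + k) := by
      intro k
      induction k with
      | zero =>
        rw [pow_one, hD p hp0]
        norm_num [qexp_zero]
      | succ k ih =>
        have hsucc : F₁ ^ (k + 1 + 1) = F₁ * F₁ ^ (k + 1) := by rw [pow_succ']
        rw [hsucc, Module.End.mul_apply, ih, map_sub, map_smul, map_smul,
          hD (p + (k + 1)) (by omega), hstep 0 1 (Or.inl rfl) (Or.inr rfl) (by simp)
            (p + k) (by omega)]
        rw [smul_sub, smul_smul, smul_smul, sub_sub]
        have i1 : (p + ((k : ℤ) + 1) + 1) = p + (k : ℤ) + 1 + 1 := by ring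
        have i5 : (p + (((k + 1 : ℕ) : ℤ) + 1)) = p + (k : ℤ) + 1 + 1 := by push_cast; ring
        have i2 : (p + ((k : ℤ) + 1)) = p + (k : ℤ) + 1 := by ring
        have i4 : (p + ((k + 1 : ℕ) : ℤ)) = p + (k : ℤ) + 1 := by push_cast; ring
        rw [i1, i5, i2, i4, ← add_smul]
        congr 1
        · congr 1
          rw [qexp_mul]
          congr 1
          push_cast; ring
        · congr 1
          have hb : (∑ j ∈ Finset.range (k + 1),
                qexp ℓ (-(j : ℂ) + (k : ℂ) * (2 - (p : ℂ)) - ((k : ℂ) + 1) * k / 2))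
              * qexp ℓ (((1 : ℤ) : ℂ) - ((p + (k : ℤ) : ℤ) : ℂ))
              = ∑ j ∈ Finset.range (k + 1),
                qexp ℓ (-(j : ℂ) + ((k + 1 : ℕ) : ℂ) * (2 - (p : ℂ))
                  - (((k + 1 : ℕ) : ℂ) + 1) * ((k + 1 : ℕ) : ℂ) / 2) := by
            rw [Finset.sum_mul]
            refine Finset.sum_congr rfl fun j _ => ?_
            rw [qexp_mul]
            congr 1
            push_cast; ring
          have ha : qexp ℓ (-((k : ℂ) + 1) * p - ((k : ℂ) + 1) * k / 2)
              = qexp ℓ (-((k + 1 : ℕ) : ℂ) + ((k + 1 : ℕ) : ℂ) * (2 - (p : ℂ))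
                  - (((k + 1 : ℕ) : ℂ) + 1) * ((k + 1 : ℕ) : ℂ) / 2) := by
            congr 1
            push_cast; ring
          rw [ha, hb, Finset.sum_range_succ _ (k + 1)]
          ring
    -- finish the (1,0) sector
    obtain ⟨m, rfl⟩ : ∃ m, ℓ = m + 1 := ⟨ℓ - 1, by omega⟩
    rw [key m, w_zero_of_big (m + 1) 1 0 (p + ((m : ℤ) + 1)) (by push_cast; omega),
      smul_zero, zero_sub, neg_eq_zero]
    by_cases hp : p = 0
    · subst hp
      have hterm : ∀ j ∈ Finset.range (m + 1),
          qexp (m + 1) (-(j : ℂ) + (m : ℂ) * (2 - ((0 : ℤ) : ℂ)) - ((m : ℂ) + 1) * m / 2)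
            = qexp (m + 1) (-1) ^ j
              * qexp (m + 1) ((m : ℂ) * 2 - ((m : ℂ) + 1) * m / 2) := by
        intro j _
        rw [qexp_pow, qexp_mul]
        congr 1
        push_cast; ring
      rw [Finset.sum_congr rfl hterm, ← Finset.sum_mul,
        geom_sum_eq (qexp_neg_one_ne_one (m + 1) h3),
        qexp_neg_one_pow (m + 1) (by omega)]
      simp
    · rw [w_zero_of_big (m + 1) 0 1 (p + (m : ℤ)) (by push_cast; omega), smul_zero]
  · -- sectors with no jump term
    have hchain : ∀ k : ℕ, ∃ c : ℂ, (F₁ ^ k) (w ℓ ρ σ p) = c • w ℓ ρ σ (p + k) := by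
      intro k
      induction k with
      | zero => exact ⟨1, by simp⟩
      | succ k ih =>
        obtain ⟨c, hc⟩ := ih
        refine ⟨c * qexp ℓ ((σ : ℂ) - (p + k)), ?_⟩
        have hsucc : F₁ ^ (k + 1) = F₁ * F₁ ^ k := by rw [pow_succ']
        rw [hsucc, Module.End.mul_apply, hc, map_smul,
          hstep ρ σ hρ hσ hcase (p + k) (by omega), smul_smul]
        congr 2
        · push_cast; ring
        · push_cast; ring
    obtain ⟨c, hc⟩ := hchain ℓ
    rw [hc, w_zero_of_big ℓ ρ σ (p + ℓ) (by omega), smul_zero]
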